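/- Let -1 < a < 1/2, let z ∈ (-1, a) satisfy z^3 + (3-2a)z^2 + (a^2-2)z - a^2 + 2a - 2 = 0, and let p be the cubic polynomial p(x) = (x-z)(x-a)(x-1)/(2(1+z)(1+a)) - (x^2-1)(x-a)/((1-z^2)(z-a)) - (x^2-1)(x-z)/((1-a^2)(z-a)) + (x+1)(x-z)(x-a)/(2(1-z)(1-a)). Then the derivative of p vanishes at z: p'(z) = 0. -/

import Mathlib

theorem stmt_6 (a z : ℝ) (ha : -1 < a) (ha' : a < 1/2)
    (hz : -1 < z) (hza : z < a)
    (hroot : z^3 + (3 - 2*a)*z^2 + (a^2 - 2)*z - a^2 + 2*a - 2 = 0)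
    (p : ℝ → ℝ)
    (hp : ∀ x, p x = (x - z)*(x - a)*(x - 1) / (2*(1 + z)*(1 + a))
        - (x^2 - 1)*(x - a) / ((1 - z^2)*(z - a))
        - (x^2 - 1)*(x - z) / ((1 - a^2)*(z - a))
        + (x + 1)*(x - z)*(x - a) / (2*(1 - z)*(1 - a))) :
    deriv p z = 0 := by
  have hfun : p = fun x => (x - z)*(x - a)*(x - 1) / (2*(1 + z)*(1 + a))
        - (x^2 - 1)*(x - a) / ((1 - z^2)*(z - a))
        - (x^2 - 1)*(x - z) / ((1 - a^2)*(z - a))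
        + (x + 1)*(x - z)*(x - a) / (2*(1 - z)*(1 - a)) := funext hp
  have hid : HasDerivAt (fun x : ℝ => x) 1 z := hasDerivAt_id z
  have hsq : HasDerivAt (fun x : ℝ => x^2 - 1) (2*z) z := by
    have := ((hasDerivAt_pow 2 z).sub_const 1)
    simpa using this
  have h1 : HasDerivAt (fun x : ℝ => (x - z)*(x - a)*(x - 1))
      ((1*(z-a) + (z-z)*1)*(z-1) + (z-z)*(z-a)*1) z :=
    (((hid.sub_const z).mul (hid.sub_const a)).mul (hid.sub_const 1))
  have h2 : HasDerivAt (fun x : ℝ => (x^2 - 1)*(x - a))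
      (2*z*(z-a) + (z^2-1)*1) z := hsq.mul (hid.sub_const a)
  have h3 : HasDerivAt (fun x : ℝ => (x^2 - 1)*(x - z))
      (2*z*(z-z) + (z^2-1)*1) z := hsq.mul (hid.sub_const z)
  have h4 : HasDerivAt (fun x : ℝ => (x + 1)*(x - z)*(x - a))
      ((1*(z-z) + (z+1)*1)*(z-a) + (z+1)*(z-z)*1) z :=
    (((hid.add_const 1).mul (hid.sub_const z)).mul (hid.sub_const a))
  have H := (((h1.div_const (2*(1 + z)*(1 + a))).sub
      (h2.div_const ((1 - z^2)*(z - a)))).sub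
      (h3.div_const ((1 - a^2)*(z - a)))).add
      (h4.div_const (2*(1 - z)*(1 - a)))
  rw [hfun]
  erw [H.deriv]
  have d1 : (2*(1 + z)*(1 + a)) ≠ 0 := by nlinarith
  have d2 : ((1 - z^2)*(z - a)) ≠ 0 :=
    (mul_neg_of_pos_of_neg (by nlinarith) (by linarith)).ne
  have d3 : ((1 - a^2)*(z - a)) ≠ 0 :=
    (mul_neg_of_pos_of_neg (by nlinarith) (by linarith)).ne
  have d4 : (2*(1 - z)*(1 - a)) ≠ 0 := by nlinarith
  rw [div_sub_div _ _ d1 d2, div_sub_div _ _ (mul_ne_zero d1 d2) d3,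
    div_add_div _ _ (mul_ne_zero (mul_ne_zero d1 d2) d3) d4, div_eq_zero_iff]
  refine Or.inl ?_
  linear_combination ((-4)*z + 4*z^2 + 4*z^3 - 4*z^4 + 4*a - 8*a*z + 8*a*z^3 - 4*a*z^4
    + 4*a^2 - 8*a^2*z^2 + 4*a^2*z^4 - 4*a^3 + 8*a^3*z - 8*a^3*z^3 + 4*a^3*z^4
    - 4*a^4 + 4*a^4*z + 4*a^4*z^2 - 4*a^4*z^3) * hroot
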